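/- Let G be a Borel probability measure on the unit sphere S = {z ∈ ℝ^N : |z| = 1}, let n ≥ 2 and 0 < ε ≤ 1 with (n−1)ε ≥ 2. Then G^{⊗n}{ (z¹,…,z^n) : z¹·z^l ≤ −ε for all 2 ≤ l ≤ n } ≤ (2 / ((n−1)ε)) · ( 1 + log( (n−1)ε / 2 ) ). -/

import Mathlib

open MeasureTheory
open scoped RealInnerProductSpace

section Aux

variable {N : ℕ}

private lemma cap_measurable (u : EuclideanSpace ℝ (Fin N)) (ε : ℝ) :
    MeasurableSet {z : EuclideanSpace ℝ (Fin N) | ⟪u, z⟫ ≤ -ε} :=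
  (isClosed_le (Continuous.inner continuous_const continuous_id) continuous_const).measurableSet

private lemma f_measurable (G : Measure (EuclideanSpace ℝ (Fin N))) [SFinite G] (ε : ℝ) :
    Measurable fun u : EuclideanSpace ℝ (Fin N) =>
      G {z : EuclideanSpace ℝ (Fin N) | ⟪u, z⟫ ≤ -ε} := by
  have hs : MeasurableSet {p : EuclideanSpace ℝ (Fin N) × EuclideanSpace ℝ (Fin N) |
      ⟪p.1, p.2⟫ ≤ -ε} :=
    (isClosed_le (Continuous.inner continuous_fst continuous_snd) continuous_const).measurableSet
  exact measurable_measure_prodMk_left hs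

private lemma sphere_points_bound (ε : ℝ) (hε : 0 < ε) (k : ℕ) (hk : 1 < (k : ℝ) * ε)
    (u : Fin (k + 1) → EuclideanSpace ℝ (Fin N)) (hunit : ∀ i, ‖u i‖ = 1)
    (hpair : ∀ i i', i ≠ i' → ⟪u i, u i'⟫ ≤ -ε) : False := by
  have h0 : (0 : ℝ) ≤ ⟪∑ i, u i, ∑ i, u i⟫ := real_inner_self_nonneg
  have hexp : ⟪∑ i, u i, ∑ i, u i⟫ = ∑ i, ∑ i', ⟪u i, u i'⟫ := by
    rw [sum_inner]
    exact Finset.sum_congr rfl fun i _ => inner_sum _ _ _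
  have hrow : ∀ i : Fin (k + 1), ∑ i', ⟪u i, u i'⟫ ≤ 1 + (k : ℝ) * (-ε) := by
    intro i
    calc ∑ i', ⟪u i, u i'⟫ ≤ ∑ i' : Fin (k + 1), ((-ε) + if i = i' then 1 + ε else 0) := by
          apply Finset.sum_le_sum
          intro i' _
          by_cases h : i = i'
          · subst h
            have : ⟪u i, u i⟫ = 1 := by
              rw [real_inner_self_eq_norm_sq, hunit i]; norm_num
            simp [this, hunit i]
          · simpa [h] using hpair i i' h
      _ = 1 + (k : ℝ) * (-ε) := by
          rw [Finset.sum_add_distrib, Finset.sum_const, Finset.sum_ite_eq]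
          simp [Finset.card_univ]
          ring
  have htot : ∑ i, ∑ i', ⟪u i, u i'⟫ ≤ ((k : ℝ) + 1) * (1 + (k : ℝ) * (-ε)) := by
    calc ∑ i, ∑ i', ⟪u i, u i'⟫ ≤ ∑ _i : Fin (k + 1), (1 + (k : ℝ) * (-ε)) :=
          Finset.sum_le_sum fun i _ => hrow i
      _ = ((k : ℝ) + 1) * (1 + (k : ℝ) * (-ε)) := by
          rw [Finset.sum_const, Finset.card_univ]
          simp
          ring
  rw [hexp] at h0
  nlinarith [h0.trans htot]

private lemma B_bound (G : Measure (EuclideanSpace ℝ (Fin N))) [IsProbabilityMeasure G]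
    (hG : G (Metric.sphere (0 : EuclideanSpace ℝ (Fin N)) 1)ᶜ = 0)
    (ε γ : ℝ) (hε : 0 < ε) (hγ0 : 0 ≤ γ) (hγ1 : γ ≤ 1)
    (k : ℕ) (hk : 1 < (k : ℝ) * ε) :
    G {u : EuclideanSpace ℝ (Fin N) |
        ENNReal.ofReal γ < G {z : EuclideanSpace ℝ (Fin N) | ⟪u, z⟫ ≤ -ε}} ≤
      ENNReal.ofReal ((k : ℝ) * (1 - γ)) := by
  set B := {u : EuclideanSpace ℝ (Fin N) |
      ENNReal.ofReal γ < G {z : EuclideanSpace ℝ (Fin N) | ⟪u, z⟫ ≤ -ε}} with hBdef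
  by_contra hcon
  push_neg at hcon
  set T := (G B).toReal with hTdef
  have hGBtop : G B ≠ ⊤ := measure_ne_top G B
  have hT1 : T ≤ 1 := by
    rw [hTdef]
    exact ENNReal.toReal_le_of_le_ofReal zero_le_one (by simpa using prob_le_one)
  have hT : (k : ℝ) * (1 - γ) < T := by
    have h0 : (0 : ℝ) ≤ (k : ℝ) * (1 - γ) := mul_nonneg (Nat.cast_nonneg k) (by linarith)
    have := (ENNReal.toReal_lt_toReal ENNReal.ofReal_ne_top hGBtop).mpr hcon
    rwa [ENNReal.toReal_ofReal h0] at this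
  have hGBval : G B = ENNReal.ofReal T := (ENNReal.ofReal_toReal hGBtop).symm
  -- complement of each cap is small for points of B
  have hcompl : ∀ u ∈ B, G {z : EuclideanSpace ℝ (Fin N) | ⟪u, z⟫ ≤ -ε}ᶜ ≤
      ENNReal.ofReal (1 - γ) := by
    intro u hu
    rw [measure_compl (cap_measurable u ε) (measure_ne_top _ _), measure_univ]
    calc 1 - G {z : EuclideanSpace ℝ (Fin N) | ⟪u, z⟫ ≤ -ε}
        ≤ 1 - ENNReal.ofReal γ := tsub_le_tsub_left (le_of_lt hu) 1
      _ = ENNReal.ofReal (1 - γ) := by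
          rw [ENNReal.ofReal_sub _ hγ0, ENNReal.ofReal_one]
  have key : ∀ j : ℕ, j ≤ k + 1 → ∃ u : Fin j → EuclideanSpace ℝ (Fin N),
      (∀ i, ‖u i‖ = 1) ∧ (∀ i, u i ∈ B) ∧ (∀ i i', i ≠ i' → ⟪u i, u i'⟫ ≤ -ε) := by
    intro j
    induction j with
    | zero => exact fun _ => ⟨fun i => i.elim0, fun i => i.elim0, fun i => i.elim0,
        fun i => i.elim0⟩
    | succ j ih =>
      intro hj
      obtain ⟨u, hu1, hu2, hu3⟩ := ih (by omega)
      set bad := Bᶜ ∪ (Metric.sphere (0 : EuclideanSpace ℝ (Fin N)) 1)ᶜ ∪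
        ⋃ i : Fin j, {z : EuclideanSpace ℝ (Fin N) | ⟪u i, z⟫ ≤ -ε}ᶜ with hbaddef
    -- bad set has measure < 1
      have hbad : G bad < 1 := by
        have h1 : G bad ≤ G Bᶜ + G (Metric.sphere (0 : EuclideanSpace ℝ (Fin N)) 1)ᶜ +
            ∑ i : Fin j, G {z : EuclideanSpace ℝ (Fin N) | ⟪u i, z⟫ ≤ -ε}ᶜ := by
          refine le_trans (measure_union_le _ _) ?_
          gcongr
          · exact measure_union_le _ _
          · exact measure_iUnion_fintype_le _ _
        have h2 : G Bᶜ = ENNReal.ofReal (1 - T) := by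
          rw [measure_compl ?_ hGBtop, measure_univ, hGBval,
            ENNReal.ofReal_sub _ (ENNReal.toReal_nonneg), ENNReal.ofReal_one]
          exact measurableSet_lt measurable_const
            (by
              have hs : MeasurableSet {p : EuclideanSpace ℝ (Fin N) ×
                  EuclideanSpace ℝ (Fin N) | ⟪p.1, p.2⟫ ≤ -ε} :=
                (isClosed_le (Continuous.inner continuous_fst continuous_snd)
                  continuous_const).measurableSet
              exact measurable_measure_prodMk_left hs)
        have h3 : ∑ i : Fin j, G {z : EuclideanSpace ℝ (Fin N) | ⟪u i, z⟫ ≤ -ε}ᶜ ≤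
            ENNReal.ofReal ((j : ℝ) * (1 - γ)) := by
          calc ∑ i : Fin j, G {z : EuclideanSpace ℝ (Fin N) | ⟪u i, z⟫ ≤ -ε}ᶜ
              ≤ ∑ _i : Fin j, ENNReal.ofReal (1 - γ) :=
                Finset.sum_le_sum fun i _ => hcompl (u i) (hu2 i)
            _ = ENNReal.ofReal ((j : ℝ) * (1 - γ)) := by
                rw [Finset.sum_const, Finset.card_univ, Fintype.card_fin, nsmul_eq_mul,
                  ENNReal.ofReal_mul (Nat.cast_nonneg j), ENNReal.ofReal_natCast]
        calc G bad ≤ ENNReal.ofReal (1 - T) + 0 + ENNReal.ofReal ((j : ℝ) * (1 - γ)) := by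
              rw [← h2, ← hG]; exact h1.trans (by gcongr)
          _ = ENNReal.ofReal ((1 - T) + (j : ℝ) * (1 - γ)) := by
              rw [add_zero, ← ENNReal.ofReal_add (by linarith)
                (mul_nonneg (Nat.cast_nonneg j) (by linarith))]
          _ < 1 := by
              rw [ENNReal.ofReal_lt_one]
              have hjk : (j : ℝ) ≤ (k : ℝ) := by exact_mod_cast Nat.le_of_succ_le_succ hj
              nlinarith [hT]
      obtain ⟨z, hz⟩ : Set.Nonempty badᶜ := by
        rw [Set.nonempty_compl]
        intro h
        rw [h] at hbad
        simp at hbad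
      rw [hbaddef] at hz
      simp only [Set.compl_union, Set.mem_inter_iff, Set.mem_compl_iff, compl_compl,
        Set.compl_iUnion, Set.mem_iInter, Metric.mem_sphere, Set.mem_setOf_eq] at hz
      obtain ⟨⟨hzB, hzS⟩, hzA⟩ := hz
      refine ⟨Fin.snoc u z, ?_, ?_, ?_⟩
      · intro i
        refine Fin.lastCases ?_ ?_ i
        · rw [Fin.snoc_last]
          simpa [dist_eq_norm] using hzS
        · intro i0; rw [Fin.snoc_castSucc]; exact hu1 i0
      · intro i
        refine Fin.lastCases ?_ ?_ i
        · rw [Fin.snoc_last]; exact hzB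
        · intro i0; rw [Fin.snoc_castSucc]; exact hu2 i0
      · intro i i'
        refine Fin.lastCases ?_ (fun i0 => ?_) i <;>
          refine Fin.lastCases ?_ (fun i1 => ?_) i' <;> intro hne
        · exact absurd rfl hne
        · rw [Fin.snoc_last, Fin.snoc_castSucc, real_inner_comm]
          exact hzA i1
        · rw [Fin.snoc_last, Fin.snoc_castSucc]
          exact hzA i0
        · rw [Fin.snoc_castSucc, Fin.snoc_castSucc]
          exact hu3 i0 i1 (by simpa [Fin.castSucc_inj] using hne)
  obtain ⟨u, hu1, hu2, hu3⟩ := key (k + 1) le_rfl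
  exact sphere_points_bound ε hε k hk u hu1 hu3

private lemma main_bound (G : Measure (EuclideanSpace ℝ (Fin N))) [IsProbabilityMeasure G]
    (hG : G (Metric.sphere (0 : EuclideanSpace ℝ (Fin N)) 1)ᶜ = 0) (m : ℕ)
    (ε γ : ℝ) (hε : 0 < ε) (hγ0 : 0 ≤ γ) (hγ1 : γ ≤ 1) (k : ℕ) (hk : 1 < (k : ℝ) * ε) :
    (Measure.pi fun _ : Fin (m + 1) => G)
      {z : Fin (m + 1) → EuclideanSpace ℝ (Fin N) | ∀ l, l ≠ 0 → ⟪z 0, z l⟫ ≤ -ε} ≤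
      ENNReal.ofReal ((k : ℝ) * (1 - γ)) + ENNReal.ofReal γ ^ m := by
  set B := {u : EuclideanSpace ℝ (Fin N) |
      ENNReal.ofReal γ < G {z : EuclideanSpace ℝ (Fin N) | ⟪u, z⟫ ≤ -ε}} with hBdef
  have hBmeas : MeasurableSet B := measurableSet_lt measurable_const (f_measurable G ε)
  set E1 := (fun z : Fin (m + 1) → EuclideanSpace ℝ (Fin N) => z 0) ⁻¹' B with hE1
  set E2 := {z : Fin (m + 1) → EuclideanSpace ℝ (Fin N) |
      z 0 ∉ B ∧ ∀ l, l ≠ 0 → ⟪z 0, z l⟫ ≤ -ε} with hE2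
  have hsub : {z : Fin (m + 1) → EuclideanSpace ℝ (Fin N) |
      ∀ l, l ≠ 0 → ⟪z 0, z l⟫ ≤ -ε} ⊆ E1 ∪ E2 := by
    intro z hz
    by_cases h : z 0 ∈ B
    · exact Or.inl h
    · exact Or.inr ⟨h, hz⟩
  have hE1m : (Measure.pi fun _ : Fin (m + 1) => G) E1 = G B := by
    have hpi : E1 = Set.pi Set.univ (fun l : Fin (m + 1) => if l = 0 then B else Set.univ) := by
      ext z
      simp only [hE1, Set.mem_preimage, Set.mem_pi, Set.mem_univ, true_implies]
      constructor
      · intro h l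
        by_cases hl : l = 0
        · subst hl; simpa using h
        · simp [hl]
      · intro h
        simpa using h 0
    rw [hpi, Measure.pi_pi]
    calc ∏ l : Fin (m + 1), G (if l = 0 then B else Set.univ)
        = ∏ l : Fin (m + 1), (if l = 0 then G B else 1) := by
          refine Finset.prod_congr rfl fun l _ => ?_
          split <;> simp
      _ = G B := by rw [Finset.prod_ite_eq']; simp
  have hE2m : (Measure.pi fun _ : Fin (m + 1) => G) E2 ≤ ENNReal.ofReal γ ^ m := by
    set s : Set (EuclideanSpace ℝ (Fin N) × (Fin m → EuclideanSpace ℝ (Fin N))) :=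
      {p | p.1 ∉ B ∧ ∀ j, ⟪p.1, p.2 j⟫ ≤ -ε} with hsdef
    have hsm : MeasurableSet s := by
      have h1 : MeasurableSet {p : EuclideanSpace ℝ (Fin N) ×
          (Fin m → EuclideanSpace ℝ (Fin N)) | p.1 ∉ B} := (hBmeas.compl).preimage measurable_fst
      have h2 : ∀ j : Fin m, MeasurableSet {p : EuclideanSpace ℝ (Fin N) ×
          (Fin m → EuclideanSpace ℝ (Fin N)) | ⟪p.1, p.2 j⟫ ≤ -ε} := fun j =>
        (isClosed_le (Continuous.inner continuous_fst
          ((continuous_apply j).comp continuous_snd)) continuous_const).measurableSet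
      have : s = {p : EuclideanSpace ℝ (Fin N) ×
          (Fin m → EuclideanSpace ℝ (Fin N)) | p.1 ∉ B} ∩
          ⋂ j : Fin m, {p | ⟪p.1, p.2 j⟫ ≤ -ε} := by
        ext p
        simp [hsdef, Set.mem_iInter]
      rw [this]
      exact h1.inter (MeasurableSet.iInter h2)
    have hmp := measurePreserving_piFinSuccAbove
      (fun _ : Fin (m + 1) => (G : Measure (EuclideanSpace ℝ (Fin N)))) 0
    have hEeq : E2 = (MeasurableEquiv.piFinSuccAbove
        (fun _ : Fin (m + 1) => EuclideanSpace ℝ (Fin N)) 0) ⁻¹' s := by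
      ext z
      simp only [hE2, Set.mem_setOf_eq, Set.mem_preimage, MeasurableEquiv.piFinSuccAbove,
        MeasurableEquiv.coe_mk, Fin.insertNthEquiv_symm_apply, hsdef, Fin.removeNth,
        Fin.zero_succAbove]
      constructor
      · rintro ⟨h1, h2⟩
        exact ⟨h1, fun j => h2 j.succ (Fin.succ_ne_zero j)⟩
      · rintro ⟨h1, h2⟩
        refine ⟨h1, fun l => ?_⟩
        refine Fin.cases ?_ (fun j _ => h2 j) l
        intro h
        exact absurd rfl h
    rw [hEeq, hmp.measure_preimage hsm.nullMeasurableSet]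
    rw [Measure.prod_apply hsm]
    have hpt : ∀ x : EuclideanSpace ℝ (Fin N),
        (Measure.pi fun _ : Fin m => G) (Prod.mk x ⁻¹' s) ≤ ENNReal.ofReal γ ^ m := by
      intro x
      by_cases hx : x ∈ B
      · have : Prod.mk x ⁻¹' s = ∅ := by
          ext y; simp [hsdef, hx]
        simp [this]
      · have hpre : Prod.mk x ⁻¹' s = Set.pi Set.univ
            (fun _ : Fin m => {z : EuclideanSpace ℝ (Fin N) | ⟪x, z⟫ ≤ -ε}) := by
          ext y; simp [hsdef, hx]
        rw [hpre, Measure.pi_pi, Finset.prod_const, Finset.card_univ, Fintype.card_fin]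
        have hxle : G {z : EuclideanSpace ℝ (Fin N) | ⟪x, z⟫ ≤ -ε} ≤ ENNReal.ofReal γ :=
          not_lt.mp hx
        exact pow_le_pow_left' hxle m
    calc ∫⁻ x, (Measure.pi fun _ : Fin m => G) (Prod.mk x ⁻¹' s) ∂G
        ≤ ∫⁻ _x, ENNReal.ofReal γ ^ m ∂G := lintegral_mono hpt
      _ = ENNReal.ofReal γ ^ m := by simp
  refine le_trans (measure_mono hsub) ?_
  refine le_trans (measure_union_le _ _) ?_
  rw [hE1m]
  exact add_le_add (B_bound G hG ε γ hε hγ0 hγ1 k hk) hE2m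


end Aux

/-- Optimized bound: for `n ≥ 2`, `0 < ε ≤ 1` with `(n−1)ε ≥ 2`, the probability that `n`
i.i.d. samples from a probability measure `G` on the unit sphere satisfy `z¹·z^l ≤ −ε` for all
`2 ≤ l ≤ n` is at most `(2/((n−1)ε))·(1 + log((n−1)ε/2))`. -/
theorem all_overlaps_negative_le_log (N : ℕ) (hN : 1 ≤ N)
    (G : Measure (EuclideanSpace ℝ (Fin N))) [IsProbabilityMeasure G]
    (hG : G (Metric.sphere (0 : EuclideanSpace ℝ (Fin N)) 1)ᶜ = 0)
    (n : ℕ) (hn : 2 ≤ n) (ε : ℝ) (hε : 0 < ε) (hε1 : ε ≤ 1)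
    (hnε : 2 ≤ ((n : ℝ) - 1) * ε) :
    ((Measure.pi fun _ : Fin n => G)
        {z : Fin n → EuclideanSpace ℝ (Fin N) |
          ∀ l : Fin n, l ≠ ⟨0, by omega⟩ → ⟪z ⟨0, by omega⟩, z l⟫ ≤ -ε}).toReal ≤
      (2 / (((n : ℝ) - 1) * ε)) * (1 + Real.log (((n : ℝ) - 1) * ε / 2)) := by
  obtain ⟨m, rfl⟩ : ∃ m, n = m + 1 := ⟨n - 1, by omega⟩
  have hm1 : 1 ≤ m := by omega
  have hm0 : (0 : ℝ) < m := by exact_mod_cast hm1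
  have hcast : ((m + 1 : ℕ) : ℝ) - 1 = (m : ℝ) := by push_cast; ring
  rw [hcast] at hnε ⊢
  set M : ℝ := (m : ℝ) * ε / 2 with hM
  have hM1 : 1 ≤ M := by rw [hM]; linarith
  have hM0 : 0 < M := by linarith
  have hlogM : 0 ≤ Real.log M := Real.log_nonneg hM1
  have hlogM2 : Real.log M ≤ M - 1 := Real.log_le_sub_one_of_pos hM0
  set γ : ℝ := 1 - Real.log M / m with hγ
  have hγ1 : γ ≤ 1 := by
    rw [hγ]
    have := div_nonneg hlogM hm0.le
    linarith
  have hlogm : Real.log M ≤ m := by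
    have hεm : (m : ℝ) * ε ≤ m := by nlinarith
    rw [hM] at hlogM2 ⊢
    nlinarith
  have hγ0 : 0 ≤ γ := by
    rw [hγ]
    rw [sub_nonneg, div_le_one hm0]
    exact hlogm
  set k : ℕ := ⌊1 / ε⌋₊ + 1 with hk
  have hk1 : 1 < (k : ℝ) * ε := by
    have h1 : 1 / ε < (k : ℝ) := by
      have := Nat.lt_floor_add_one (1 / ε)
      rw [hk]
      push_cast
      linarith
    calc (1 : ℝ) = (1 / ε) * ε := by field_simp
      _ < (k : ℝ) * ε := by exact mul_lt_mul_of_pos_right h1 hε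
  have hk2 : (k : ℝ) ≤ 2 / ε := by
    have h1 : ((⌊1 / ε⌋₊ : ℝ)) ≤ 1 / ε := Nat.floor_le (by positivity)
    have h2 : (1 : ℝ) ≤ 1 / ε := one_le_one_div hε hε1
    rw [hk]
    push_cast
    have : (2:ℝ)/ε = 1/ε + 1/ε := by ring
    linarith
  have hmain := main_bound G hG m ε γ hε hγ0 hγ1 k hk1
  have hgoal : ((Measure.pi fun _ : Fin (m + 1) => G)
      {z : Fin (m + 1) → EuclideanSpace ℝ (Fin N) |
        ∀ l : Fin (m + 1), l ≠ ⟨0, by omega⟩ → ⟪z ⟨0, by omega⟩, z l⟫ ≤ -ε}).toReal ≤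
      (k : ℝ) * (1 - γ) + γ ^ m := by
    have hsame : ({z : Fin (m + 1) → EuclideanSpace ℝ (Fin N) |
        ∀ l : Fin (m + 1), l ≠ ⟨0, by omega⟩ → ⟪z ⟨0, by omega⟩, z l⟫ ≤ -ε} :
          Set (Fin (m + 1) → EuclideanSpace ℝ (Fin N))) =
        {z : Fin (m + 1) → EuclideanSpace ℝ (Fin N) | ∀ l, l ≠ 0 → ⟪z 0, z l⟫ ≤ -ε} := by
      simp [Fin.mk_zero]
    rw [hsame]
    apply ENNReal.toReal_le_of_le_ofReal
      (add_nonneg (mul_nonneg (Nat.cast_nonneg k) (by linarith)) (pow_nonneg hγ0 m))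
    refine hmain.trans ?_
    rw [← ENNReal.ofReal_pow hγ0, ← ENNReal.ofReal_add
      (mul_nonneg (Nat.cast_nonneg k) (by linarith)) (by positivity)]
  refine hgoal.trans ?_
  -- now pure real arithmetic
  have hpow : γ ^ m ≤ 2 / ((m : ℝ) * ε) := by
    have h1 : γ ≤ Real.exp (γ - 1) := by
      have := Real.add_one_le_exp (γ - 1)
      linarith
    have h2 : γ ^ m ≤ Real.exp (γ - 1) ^ m := pow_le_pow_left₀ hγ0 h1 m
    have h3 : Real.exp (γ - 1) ^ m = Real.exp ((γ - 1) * m) := by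
      rw [← Real.exp_nat_mul]
      ring_nf
    have h4 : (γ - 1) * m = -Real.log M := by
      rw [hγ]
      field_simp
      ring
    have h5 : Real.exp (-Real.log M) = 1 / M := by
      rw [Real.exp_neg, Real.exp_log hM0]
      ring
    rw [h3, h4, h5] at h2
    rw [hM] at h2
    calc γ ^ m ≤ 1 / ((m : ℝ) * ε / 2) := h2
      _ = 2 / ((m : ℝ) * ε) := by field_simp
  have hlin : (k : ℝ) * (1 - γ) ≤ (2 / ε) * (Real.log M / m) := by
    have : (1 - γ) = Real.log M / m := by rw [hγ]; ring
    rw [this]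
    exact mul_le_mul_of_nonneg_right hk2 (div_nonneg hlogM hm0.le)
  have heq : (2 / ε) * (Real.log M / m) + 2 / ((m : ℝ) * ε) =
      (2 / ((m : ℝ) * ε)) * (1 + Real.log M) := by
    field_simp
    ring
  rw [hM] at *
  linarith [hpow, hlin, heq.le]
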